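/- Fix a syndrome σ attained by some error, and for each class C having syndrome σ let n_max(C) be the number of errors e in C with E e = E_min(σ). Then for every class C̃ having syndrome σ, the limit as T → 0⁺ of Z_T(C̃) / (Σ_{C having syndrome σ} Z_T(C)) equals n_max(C̃) / (Σ_{C having syndrome σ} n_max(C)) (Proposition 1, statement 3: a probabilistic partition function decoder at T = 0 is a maximum probability decoder). -/

import Mathlib

open Finset Filter

variable {𝓔 𝓢 𝓒 : Type*}

/-- Error probability `P(e) = exp(−E e / T_N) / Σ_{e'} exp(−E e' / T_N)`. -/
noncomputable def Perr [Fintype 𝓔] (E : 𝓔 → ℝ) (T_N : ℝ) (e : 𝓔) : ℝ :=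
  Real.exp (-(E e) / T_N) / ∑ e' : 𝓔, Real.exp (-(E e') / T_N)

/-- Class partition function `Z_T(C) = Σ_{e : c e = C} exp(−E e / T)`. -/
noncomputable def Zpf [Fintype 𝓔] [DecidableEq 𝓒] (c : 𝓔 → 𝓒) (E : 𝓔 → ℝ) (T : ℝ) (C : 𝓒) : ℝ :=
  ∑ e ∈ Finset.univ.filter (fun e => c e = C), Real.exp (-(E e) / T)

/-- Class probability `P(C) = Σ_{e : c e = C} P(e)`. -/
noncomputable def Pclass [Fintype 𝓔] [DecidableEq 𝓒] (c : 𝓔 → 𝓒) (E : 𝓔 → ℝ) (T_N : ℝ) (C : 𝓒) : ℝ :=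
  ∑ e ∈ Finset.univ.filter (fun e => c e = C), Perr E T_N e

/-- Syndrome probability `P(σ) = Σ_{e : s e = σ} P(e)`. -/
noncomputable def Psynd [Fintype 𝓔] [DecidableEq 𝓢] (s : 𝓔 → 𝓢) (E : 𝓔 → ℝ) (T_N : ℝ) (σ : 𝓢) : ℝ :=
  ∑ e ∈ Finset.univ.filter (fun e => s e = σ), Perr E T_N e

/-- The finite set of classes having syndrome `σ`. -/
abbrev classesOf [Fintype 𝓔] [DecidableEq 𝓢] [DecidableEq 𝓒] (s : 𝓔 → 𝓢) (c : 𝓔 → 𝓒) (σ : 𝓢) :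
    Finset 𝓒 :=
  (Finset.univ.filter (fun e => s e = σ)).image c

/-- `Max(σ,T)`: the classes `C` having syndrome `σ` maximizing `Z_T` among classes with syndrome `σ`. -/
noncomputable def MaxSet [Fintype 𝓔] [DecidableEq 𝓢] [DecidableEq 𝓒]
    (s : 𝓔 → 𝓢) (c : 𝓔 → 𝓒) (E : 𝓔 → ℝ) (σ : 𝓢) (T : ℝ) : Finset 𝓒 :=
  (classesOf s c σ).filter (fun C => ∀ C' ∈ classesOf s c σ, Zpf c E T C' ≤ Zpf c E T C)

/-- `n_max(C)`: the number of errors in class `C` attaining the minimal energy `Emin`. -/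
noncomputable def nmax [Fintype 𝓔] [DecidableEq 𝓒] (c : 𝓔 → 𝓒) (E : 𝓔 → ℝ) (Emin : ℝ) (C : 𝓒) : ℕ :=
  (Finset.univ.filter (fun e => c e = C ∧ E e = Emin)).card


private lemma stmt2_class_lim {𝓔 : Type*} [Fintype 𝓔] (E : 𝓔 → ℝ) (Emin : ℝ) (t : Finset 𝓔)
    (hge : ∀ e ∈ t, Emin ≤ E e) :
    Filter.Tendsto (fun T : ℝ => ∑ e ∈ t, Real.exp ((Emin - E e) / T))
      (nhdsWithin 0 (Set.Ioi 0))
      (nhds ((t.filter (fun e => E e = Emin)).card : ℝ)) := by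
  classical
  have hcard : ((t.filter fun e => E e = Emin).card : ℝ)
      = ∑ e ∈ t, (if E e = Emin then (1:ℝ) else 0) := by
    rw [Finset.sum_boole]
  rw [hcard]
  refine tendsto_finset_sum t ?_
  intro e he
  by_cases hE : E e = Emin
  · simp only [hE, sub_self, zero_div, Real.exp_zero, if_true]
    exact tendsto_const_nhds
  · simp only [hE, if_false]
    have hlt : 0 < E e - Emin := sub_pos.mpr (lt_of_le_of_ne (hge e he) (Ne.symm hE))
    have h1 : Filter.Tendsto (fun T : ℝ => (Emin - E e) / T) (nhdsWithin 0 (Set.Ioi 0)) atBot := by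
      have h2 : Filter.Tendsto (fun T : ℝ => (Emin - E e) * T⁻¹)
          (nhdsWithin 0 (Set.Ioi 0)) atBot :=
        Filter.Tendsto.const_mul_atTop_of_neg (by linarith) tendsto_inv_nhdsGT_zero
      simpa [div_eq_mul_inv] using h2
    exact Real.tendsto_exp_atBot.comp h1

/-- a probabilistic partition function decoder at `T = 0` is a maximum probability
decoder: `Z_T(C̃)/Σ_C Z_T(C) → n_max(C̃)/Σ_C n_max(C)` as `T → 0⁺`. -/
theorem stmt2 {𝓔 𝓢 𝓒 : Type*} [Fintype 𝓔] [Nonempty 𝓔] [DecidableEq 𝓢] [DecidableEq 𝓒]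
    (s : 𝓔 → 𝓢) (c : 𝓔 → 𝓒) (E : 𝓔 → ℝ)
    (hrefine : ∀ e e' : 𝓔, c e = c e' → s e = s e')
    (σ : 𝓢) (hσ : ∃ e, s e = σ)
    (Emin : ℝ) (hEmin : IsLeast (E '' {e | s e = σ}) Emin)
    (Ctil : 𝓒) (hCtil : ∃ e, c e = Ctil ∧ s e = σ) :
    Filter.Tendsto (fun T => Zpf c E T Ctil / ∑ C ∈ classesOf s c σ, Zpf c E T C)
      (nhdsWithin 0 (Set.Ioi 0))
      (nhds ((nmax c E Emin Ctil : ℝ) / ∑ C ∈ classesOf s c σ, (nmax c E Emin C : ℝ))) := by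
  classical
  obtain ⟨em, hems, hemE⟩ : ∃ e, s e = σ ∧ E e = Emin := by
    obtain ⟨e, he, hE⟩ := hEmin.1
    exact ⟨e, he, hE⟩
  have hge : ∀ e, s e = σ → Emin ≤ E e := fun e he => hEmin.2 ⟨e, he, rfl⟩
  have hsynd : ∀ C ∈ classesOf s c σ, ∀ e, c e = C → s e = σ := by
    intro C hC e he
    simp only [classesOf, Finset.mem_image, Finset.mem_filter, Finset.mem_univ, true_and] at hC
    obtain ⟨e', he's, he'c⟩ := hC
    rw [hrefine e e' (he.trans he'c.symm), he's]
  have hgeC : ∀ C ∈ classesOf s c σ, ∀ e ∈ Finset.univ.filter (fun e => c e = C), Emin ≤ E e := by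
    intro C hC e he
    simp only [Finset.mem_filter, Finset.mem_univ, true_and] at he
    exact hge e (hsynd C hC e he)
  have hCtilmem : Ctil ∈ classesOf s c σ := by
    obtain ⟨e, hec, hes⟩ := hCtil
    exact Finset.mem_image.mpr ⟨e, by simp [hes], hec⟩
  have hnmax_eq : ∀ C : 𝓒, (nmax c E Emin C : ℝ)
      = (((Finset.univ.filter (fun e => c e = C)).filter (fun e => E e = Emin)).card : ℝ) := by
    intro C
    simp [nmax, Finset.filter_filter]
  have hnum : Filter.Tendsto
      (fun T : ℝ => ∑ e ∈ Finset.univ.filter (fun e => c e = Ctil), Real.exp ((Emin - E e) / T))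
      (nhdsWithin 0 (Set.Ioi 0)) (nhds ((nmax c E Emin Ctil : ℝ))) := by
    rw [hnmax_eq]
    exact stmt2_class_lim E Emin _ (hgeC Ctil hCtilmem)
  have hden : Filter.Tendsto
      (fun T : ℝ => ∑ C ∈ classesOf s c σ,
        ∑ e ∈ Finset.univ.filter (fun e => c e = C), Real.exp ((Emin - E e) / T))
      (nhdsWithin 0 (Set.Ioi 0)) (nhds (∑ C ∈ classesOf s c σ, (nmax c E Emin C : ℝ))) := by
    refine tendsto_finset_sum _ ?_
    intro C hC
    rw [hnmax_eq]
    exact stmt2_class_lim E Emin _ (hgeC C hC)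
  have hpos : (0 : ℝ) < ∑ C ∈ classesOf s c σ, (nmax c E Emin C : ℝ) := by
    have hmem : c em ∈ classesOf s c σ := Finset.mem_image.mpr ⟨em, by simp [hems], rfl⟩
    have h1 : 0 < nmax c E Emin (c em) := by
      refine Finset.card_pos.mpr ⟨em, ?_⟩
      simp [nmax, hemE]
    refine Finset.sum_pos' (fun C _ => by positivity) ⟨c em, hmem, ?_⟩
    exact_mod_cast h1
  have hdiv := hnum.div hden (ne_of_gt hpos)
  refine hdiv.congr (fun T => ?_)
  have hkey : ∀ t : Finset 𝓔, (∑ e ∈ t, Real.exp ((Emin - E e) / T))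
      = (∑ e ∈ t, Real.exp (-(E e) / T)) * Real.exp (Emin / T) := by
    intro t
    rw [Finset.sum_mul]
    refine Finset.sum_congr rfl fun e _ => ?_
    rw [← Real.exp_add, sub_div, neg_div]
    ring_nf
  simp only [Pi.div_apply, hkey, Zpf]
  rw [← Finset.sum_mul, mul_div_mul_right _ _ (Real.exp_ne_zero _)]
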